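/- Let S be a bounded subset of ℝ^d, let L be a lattice in ℝ^d with generating vectors v_1,…,v_d such that S + L = ℝ^d, and let δ be the metric induced by some norm on ℝ^d. Then there are positive real numbers η and ρ such that for every r ∈ (0,1): if v'_1,…,v'_d are vectors with δ(v_i, v'_i) < r·η for all i ≤ d, and L' is the lattice generated by v'_1,…,v'_d, and S⁺ is the set of points within δ-distance r·ρ of S, then S⁺ + L' = ℝ^d. -/

import Mathlib

lemma fLower (d : ℕ) (f : (Fin d → ℝ) → ℝ)
    (hf0 : ∀ x, f x = 0 ↔ x = 0)
    (hfsmul : ∀ (a : ℝ) (x : Fin d → ℝ), f (a • x) = |a| * f x)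
    (hftri : ∀ x y : Fin d → ℝ, f (x + y) ≤ f x + f y) :
    ∃ c > 0, ∀ x, c * ‖x‖ ≤ f x := by
  have hneg : ∀ x, f (-x) = f x := by
    intro x
    have := hfsmul (-1) x
    simpa using this
  have hnonneg : ∀ x, 0 ≤ f x := by
    intro x
    have h := hftri x (-x)
    rw [add_neg_cancel, hneg, (hf0 0).mpr rfl] at h
    linarith
  -- upper bound: f x ≤ A * ‖x‖
  have hx_sum : ∀ x : Fin d → ℝ, x = ∑ i, x i • (Pi.single i 1 : Fin d → ℝ) := by
    intro x
    ext j
    simp [Pi.single_apply, Finset.sum_apply]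
  have hupper : ∃ A ≥ 0, ∀ x : Fin d → ℝ, f x ≤ A * ‖x‖ := by
    refine ⟨∑ i, f ((Pi.single i 1 : Fin d → ℝ)), Finset.sum_nonneg fun i _ => hnonneg _, fun x => ?_⟩
    calc f x = f (∑ i, x i • (Pi.single i 1 : Fin d → ℝ)) := by rw [← hx_sum]
    _ ≤ ∑ i, f (x i • (Pi.single i 1 : Fin d → ℝ)) :=
        Finset.le_sum_of_subadditive f ((hf0 0).mpr rfl).le hftri _ _
    _ = ∑ i, |x i| * f ((Pi.single i 1 : Fin d → ℝ)) := by simp [hfsmul]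
    _ ≤ ∑ i, ‖x‖ * f ((Pi.single i 1 : Fin d → ℝ)) := by
        refine Finset.sum_le_sum fun i _ => ?_
        exact mul_le_mul_of_nonneg_right (by
          rw [← Real.norm_eq_abs]; exact norm_le_pi_norm x i) (hnonneg _)
    _ = (∑ i, f ((Pi.single i 1 : Fin d → ℝ))) * ‖x‖ := by rw [← Finset.mul_sum, mul_comm]
  obtain ⟨A0, hA00, hA0'⟩ := hupper
  set A := A0 + 1 with hAdef
  have hA' : 0 < A := by positivity
  have hA : ∀ x : Fin d → ℝ, f x ≤ A * ‖x‖ := fun x =>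
    (hA0' x).trans (by nlinarith [norm_nonneg x])
  -- continuity
  have hcont : Continuous f := by
    rw [Metric.continuous_iff]
    intro x ε hε
    refine ⟨ε / A, by positivity, fun y hy => ?_⟩
    have h1 : f y ≤ f x + A * ‖y - x‖ := by
      have := hftri x (y - x); simp only [add_sub_cancel] at this
      have := hA (y - x); linarith
    have h2 : f x ≤ f y + A * ‖x - y‖ := by
      have := hftri y (x - y); simp only [add_sub_cancel] at this
      have := hA (x - y); linarith
    rw [Real.dist_eq]
    rw [dist_eq_norm] at hy
    have hxy : ‖x - y‖ = ‖y - x‖ := by rw [norm_sub_rev]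
    have : A * ‖y - x‖ < ε := by
      calc A * ‖y - x‖ < A * (ε / A) := by
            exact mul_lt_mul_of_pos_left hy hA'
      _ = ε := by field_simp
    rw [abs_lt]; constructor <;> nlinarith
  rcases Nat.eq_zero_or_pos d with hd | hd
  · subst hd
    exact ⟨1, one_pos, fun x => by
      have hx : x = 0 := Subsingleton.elim x 0
      rw [hx, norm_zero, (hf0 0).mpr rfl, mul_zero]⟩
  -- compactness
  have hsne : (Metric.sphere (0 : Fin d → ℝ) 1).Nonempty := by
    refine ⟨Pi.single ⟨0, hd⟩ 1, ?_⟩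
    simp [Pi.norm_single]
  obtain ⟨z, hz, hzmin⟩ := (isCompact_sphere (0 : Fin d → ℝ) 1).exists_isMinOn hsne
    (hcont.continuousOn)
  have hz1 : ‖z‖ = 1 := by simpa using hz
  have hc0 : 0 < f z := by
    rcases (hnonneg z).lt_or_eq with h | h
    · exact h
    · exfalso
      have : z = 0 := (hf0 z).mp h.symm
      rw [this] at hz1; simp at hz1
  refine ⟨f z, hc0, fun x => ?_⟩
  rcases eq_or_ne x 0 with rfl | hx
  · simp [(hf0 0).mpr rfl]
  · have hxn : (0:ℝ) < ‖x‖ := norm_pos_iff.mpr hx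
    have hmem : ‖x‖⁻¹ • x ∈ Metric.sphere (0 : Fin d → ℝ) 1 := by
      simp [norm_smul, abs_of_pos (inv_pos.mpr hxn), inv_mul_cancel₀ hxn.ne']
    simp only [isMinOn_iff] at hzmin
    have := hzmin _ hmem
    have h2 : f (‖x‖⁻¹ • x) = ‖x‖⁻¹ * f x := by
      rw [hfsmul, abs_of_pos (inv_pos.mpr hxn)]
    rw [h2] at this
    calc f z * ‖x‖ ≤ (‖x‖⁻¹ * f x) * ‖x‖ := by nlinarith
    _ = f x := by field_simp


lemma fCoord (d : ℕ) (hd : 0 < d) (f : (Fin d → ℝ) → ℝ)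
    (hlow : ∃ c > 0, ∀ x, c * ‖x‖ ≤ f x)
    (v : Fin d → (Fin d → ℝ)) (hv : LinearIndependent ℝ v) :
    ∃ K > 0, ∀ c : Fin d → ℝ, ∑ i, |c i| ≤ K * f (∑ i, c i • v i) := by
  obtain ⟨c0, hc0, hlow⟩ := hlow
  haveI : Nonempty (Fin d) := ⟨⟨0, hd⟩⟩
  let b : Module.Basis (Fin d) ℝ (Fin d → ℝ) := basisOfLinearIndependentOfCardEqFinrank hv (by simp)
  have hb : ∀ i, b i = v i := fun i => by
    simp [b, coe_basisOfLinearIndependentOfCardEqFinrank]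
  let ℓ : Fin d → ((Fin d → ℝ) →L[ℝ] ℝ) := fun i => LinearMap.toContinuousLinearMap (b.coord i)
  set C := ∑ i, ‖ℓ i‖ with hC
  have hCnn : 0 ≤ C := Finset.sum_nonneg fun i _ => norm_nonneg _
  refine ⟨C / c0 + 1, add_pos_of_nonneg_of_pos (div_nonneg hCnn hc0.le) one_pos, fun c => ?_⟩
  set x := ∑ i, c i • v i with hx
  have hxb : x = ∑ i, c i • b i := by
    rw [hx]; exact Finset.sum_congr rfl fun i _ => by rw [hb]
  have hrep : ∀ i, b.repr x i = c i := by
    intro i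
    rw [hxb, b.repr_sum_self]
  have h1 : ∑ i, |c i| ≤ C * ‖x‖ := by
    rw [hC, Finset.sum_mul]
    refine Finset.sum_le_sum fun i _ => ?_
    rw [← hrep i]
    have : b.repr x i = ℓ i x := rfl
    rw [this, ← Real.norm_eq_abs]
    exact (ℓ i).le_opNorm x
  have h2 : c0 * ‖x‖ ≤ f x := hlow x
  have h3 : ‖x‖ ≤ f x / c0 := by rw [le_div_iff₀ hc0]; nlinarith
  have h4 : 0 ≤ f x := le_trans (by positivity) h2
  calc ∑ i, |c i| ≤ C * ‖x‖ := h1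
    _ ≤ C * (f x / c0) := mul_le_mul_of_nonneg_left h3 hCnn
    _ = (C / c0) * f x := by ring
    _ ≤ (C / c0 + 1) * f x := by nlinarith


theorem stmt6' (d : ℕ) (S : Set (Fin d → ℝ))
    (v : Fin d → (Fin d → ℝ)) (hv : LinearIndependent ℝ v)
    (f : (Fin d → ℝ) → ℝ)
    (hf0 : ∀ x, f x = 0 ↔ x = 0)
    (hfsmul : ∀ (a : ℝ) (x : Fin d → ℝ), f (a • x) = |a| * f x)
    (hftri : ∀ x y : Fin d → ℝ, f (x + y) ≤ f x + f y)
    (hcoord : ∃ K > 0, ∀ c : Fin d → ℝ, ∑ i, |c i| ≤ K * f (∑ i, c i • v i))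
    (hbdd : ∃ M : ℝ, ∀ x ∈ S, f x ≤ M)
    (hcover : ∀ y : Fin d → ℝ, ∃ s ∈ S, y - s ∈ AddSubgroup.closure (Set.range v)) :
    ∃ η > (0 : ℝ), ∃ ρ > (0 : ℝ), ∀ r : ℝ, 0 < r → r < 1 →
      ∀ v' : Fin d → (Fin d → ℝ), (∀ i, f (v i - v' i) < r * η) →
        ∀ y : Fin d → ℝ, ∃ p : Fin d → ℝ, (∃ x ∈ S, f (p - x) ≤ r * ρ) ∧
          y - p ∈ AddSubgroup.closure (Set.range v') := by
  have hneg : ∀ x, f (-x) = f x := fun x => by simpa using hfsmul (-1) x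
  have hnonneg : ∀ x, 0 ≤ f x := by
    intro x
    have h := hftri x (-x)
    rw [add_neg_cancel, hneg, (hf0 0).mpr rfl] at h
    linarith
  obtain ⟨M0, hM0⟩ := hbdd
  obtain ⟨s0, hs0, -⟩ := hcover 0
  set M := max M0 (f s0) with hMdef
  have hM : ∀ x ∈ S, f x ≤ M := fun x hx => (hM0 x hx).trans (le_max_left _ _)
  have hMnn : 0 ≤ M := (hnonneg s0).trans (le_max_right _ _)
  obtain ⟨K, hK, hKb⟩ := hcoord
  refine ⟨1/(2*K), by positivity, (4*M+1)/2, by positivity, fun r hr0 hr1 v' hv' => ?_⟩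
  have hsub : ∀ y : Fin d → ℝ, ∃ s ∈ S, ∃ w ∈ AddSubgroup.closure (Set.range v'),
      f (y - w - s) ≤ f (y - s) * r / 2 := by
    intro y
    obtain ⟨s, hs, hys⟩ := hcover y
    rw [← Submodule.span_int_eq_addSubgroupClosure, Submodule.mem_toAddSubgroup,
        Submodule.mem_span_range_iff_exists_fun] at hys
    obtain ⟨m, hm⟩ := hys
    refine ⟨s, hs, ∑ i, m i • v' i, sum_mem fun i _ =>
      AddSubgroup.zsmul_mem _ (AddSubgroup.subset_closure (Set.mem_range_self i)) _, ?_⟩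
    have hmr : ∀ (u : Fin d → (Fin d → ℝ)), ∑ i, m i • u i = ∑ i, ((m i : ℝ)) • u i := by
      intro u
      exact Finset.sum_congr rfl fun i _ => (Int.cast_smul_eq_zsmul ℝ (m i) (u i)).symm
    have he : y - (∑ i, m i • v' i) - s = ∑ i, ((m i:ℝ)) • (v i - v' i) := by
      rw [sub_right_comm, ← hm, hmr v, hmr v', ← Finset.sum_sub_distrib]
      exact Finset.sum_congr rfl fun i _ => (smul_sub _ _ _).symm
    have h4 : ∑ i, |(m i:ℝ)| ≤ K * f (y - s) := by
      have := hKb (fun i => (m i : ℝ))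
      rwa [← hmr v, hm] at this
    have hsum_nn : 0 ≤ ∑ i, |(m i:ℝ)| := Finset.sum_nonneg fun i _ => abs_nonneg _
    calc f (y - (∑ i, m i • v' i) - s) = f (∑ i, ((m i:ℝ)) • (v i - v' i)) := by rw [he]
      _ ≤ ∑ i, f (((m i:ℝ)) • (v i - v' i)) :=
          Finset.le_sum_of_subadditive f ((hf0 0).mpr rfl).le hftri _ _
      _ = ∑ i, |(m i:ℝ)| * f (v i - v' i) := by simp only [hfsmul]
      _ ≤ ∑ i, |(m i:ℝ)| * (r * (1/(2*K))) :=
          Finset.sum_le_sum fun i _ => mul_le_mul_of_nonneg_left (hv' i).le (abs_nonneg _)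
      _ = (∑ i, |(m i:ℝ)|) * (r * (1/(2*K))) := by rw [← Finset.sum_mul]
      _ ≤ (K * f (y - s)) * (r * (1/(2*K))) := by
          refine mul_le_mul_of_nonneg_right h4 (by positivity)
      _ = f (y - s) * r / 2 := by field_simp
  have hys_le : ∀ y s : Fin d → ℝ, s ∈ S → f (y - s) ≤ f y + M := by
    intro y s hs
    have := hftri y (-s)
    rw [hneg] at this
    rw [sub_eq_add_neg]
    exact this.trans (by linarith [hM s hs])
  have main : ∀ n : ℕ, ∀ y, f y ≤ 3*M + 1 + n →
      ∃ p : Fin d → ℝ, (∃ x ∈ S, f (p - x) ≤ r * ((4*M+1)/2)) ∧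
        y - p ∈ AddSubgroup.closure (Set.range v') := by
    intro n
    induction n with
    | zero =>
      intro y hy
      simp only [Nat.cast_zero, add_zero] at hy
      obtain ⟨s, hs, w, hw, herr⟩ := hsub y
      refine ⟨y - w, ⟨s, hs, ?_⟩, by simpa using hw⟩
      have h1 := hys_le y s hs
      have h2 := hnonneg (y - s)
      calc f (y - w - s) ≤ f (y - s) * r / 2 := herr
        _ ≤ r * ((4*M+1)/2) := by nlinarith
    | succ n ih =>
      intro y hy
      obtain ⟨s, hs, w, hw, herr⟩ := hsub y
      have hfy1 : f (y - w) ≤ 3*M + 1 + n := by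
        have h1 : f (y - w) ≤ f (y - w - s) + f s := by
          have := hftri (y - w - s) s
          rwa [sub_add_cancel] at this
        have h2 := hys_le y s hs
        have h3 := hnonneg (y - s)
        have h4 := hM s hs
        have h5 : (n:ℝ) ≥ 0 := Nat.cast_nonneg n
        push_cast at hy ⊢
        nlinarith
      obtain ⟨p, hp, hyp⟩ := ih (y - w) hfy1
      refine ⟨p, hp, ?_⟩
      have hsplit : y - p = w + (y - w - p) := by abel
      rw [hsplit]
      exact add_mem hw hyp
  intro y
  obtain ⟨n, hn⟩ := exists_nat_ge (f y)
  exact main n y (by linarith)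

/-- Let `S` be a bounded subset of `ℝ^d`, `L` the lattice generated by
linearly independent vectors `v 1, …, v d` with `S + L = ℝ^d`, and `δ(x,y) = f (x-y)`
the metric induced by a norm `f`. Then there are `η, ρ > 0` such that for all
`r ∈ (0,1)`: if `δ(v i, v' i) < r·η` for all `i` and `L'` is the lattice generated by
the `v' i`, then `S⁺ + L' = ℝ^d`, where `S⁺` is the set of points within `δ`-distance
`r·ρ` of `S`. -/
theorem stmt6 (d : ℕ) (S : Set (Fin d → ℝ))
    (v : Fin d → (Fin d → ℝ)) (hv : LinearIndependent ℝ v)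
    (f : (Fin d → ℝ) → ℝ)
    (hf0 : ∀ x, f x = 0 ↔ x = 0)
    (hfsmul : ∀ (a : ℝ) (x : Fin d → ℝ), f (a • x) = |a| * f x)
    (hftri : ∀ x y : Fin d → ℝ, f (x + y) ≤ f x + f y)
    (hbdd : ∃ M : ℝ, ∀ x ∈ S, f x ≤ M)
    (hcover : ∀ y : Fin d → ℝ, ∃ s ∈ S, y - s ∈ AddSubgroup.closure (Set.range v)) :
    ∃ η > (0 : ℝ), ∃ ρ > (0 : ℝ), ∀ r : ℝ, 0 < r → r < 1 →
      ∀ v' : Fin d → (Fin d → ℝ), (∀ i, f (v i - v' i) < r * η) →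
        ∀ y : Fin d → ℝ, ∃ p : Fin d → ℝ, (∃ x ∈ S, f (p - x) ≤ r * ρ) ∧
          y - p ∈ AddSubgroup.closure (Set.range v') := by
  refine stmt6' d S v hv f hf0 hfsmul hftri ?_ hbdd hcover
  rcases Nat.eq_zero_or_pos d with hd | hd
  · subst hd
    refine ⟨1, one_pos, fun c => ?_⟩
    have h0 : (∑ i, c i • v i) = 0 := by simp
    rw [show (∑ i, |c i|) = 0 by simp, h0, (hf0 0).mpr rfl]
    norm_num
  · exact fCoord d hd f (fLower d f hf0 hfsmul hftri) v hv
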